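/- Let 𝓑 be a set of n pairwise disjoint balls in ℝ^d with center set C, let q ∈ ℝ^d, let k ≤ n, and let γ = min(k, c_d). Then d_{k-γ}(C, q)/2 ≤ d_k(𝓑, q), where d_{k-γ}(C, q) is the distance from q to its (k-γ)-th nearest center and d_k(𝓑, q) is the k-th nearest ball distance (with the convention that when k = γ the left side is 0). -/

import Mathlib

/-- Distance from a point `q` to the ball `B(c, r)`. -/
noncomputable def ballDist {d : ℕ} (q c : EuclideanSpace ℝ (Fin d)) (r : ℝ) : ℝ :=
  max (‖q - c‖ - r) 0

/-- The `k`-th smallest distance from `q` to the balls `B (c i) (r i)`.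
Taking all radii `0` gives the `k`-th nearest center distance. -/
noncomputable def kthDist {d n : ℕ} (c : Fin n → EuclideanSpace ℝ (Fin d))
    (r : Fin n → ℝ) (k : ℕ) (q : EuclideanSpace ℝ (Fin d)) : ℝ :=
  sInf {x : ℝ | 0 ≤ x ∧ k ≤ {i : Fin n | ballDist q (c i) (r i) ≤ x}.ncard}

lemma kthDist_set_nonempty {d n : ℕ} (c : Fin n → EuclideanSpace ℝ (Fin d))
    (r : Fin n → ℝ) (k : ℕ) (q : EuclideanSpace ℝ (Fin d)) (hkn : k ≤ n) :
    {x : ℝ | 0 ≤ x ∧ k ≤ {i : Fin n | ballDist q (c i) (r i) ≤ x}.ncard}.Nonempty := by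
  refine ⟨∑ i, ballDist q (c i) (r i),
    Finset.sum_nonneg fun i _ => le_max_right _ _, ?_⟩
  have h : {i : Fin n | ballDist q (c i) (r i) ≤ ∑ j, ballDist q (c j) (r j)} = Set.univ := by
    ext i
    simp only [Set.mem_setOf_eq, Set.mem_univ, iff_true]
    exact Finset.single_le_sum (f := fun j => ballDist q (c j) (r j))
      (fun j _ => le_max_right _ _) (Finset.mem_univ i)
  rw [h, Set.ncard_univ]
  simpa using hkn

lemma kthDist_le {d n : ℕ} (c : Fin n → EuclideanSpace ℝ (Fin d)) (r : Fin n → ℝ)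
    (k : ℕ) (q : EuclideanSpace ℝ (Fin d)) {x : ℝ} (hx : 0 ≤ x)
    (h : k ≤ {i : Fin n | ballDist q (c i) (r i) ≤ x}.ncard) :
    kthDist c r k q ≤ x :=
  csInf_le ⟨0, fun y hy => hy.1⟩ ⟨hx, h⟩

lemma kthDist_nonneg {d n : ℕ} (c : Fin n → EuclideanSpace ℝ (Fin d)) (r : Fin n → ℝ)
    (k : ℕ) (q : EuclideanSpace ℝ (Fin d)) (hkn : k ≤ n) :
    0 ≤ kthDist c r k q :=
  le_csInf (kthDist_set_nonempty c r k q hkn) fun _ hx => hx.1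

lemma kthDist_mem {d n : ℕ} (c : Fin n → EuclideanSpace ℝ (Fin d)) (r : Fin n → ℝ)
    (k : ℕ) (q : EuclideanSpace ℝ (Fin d)) (hkn : k ≤ n) :
    k ≤ {i : Fin n | ballDist q (c i) (r i) ≤ kthDist c r k q}.ncard := by
  set g : Fin n → ℝ := fun i => ballDist q (c i) (r i) with hg
  set τ := kthDist c r k q with hτ
  by_cases hDF : (Finset.univ.filter fun i => τ < g i).Nonempty
  · set ε := (Finset.univ.filter fun i => τ < g i).inf' hDF (fun i => g i - τ) with hε
    have hεpos : 0 < ε := by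
      rw [hε, Finset.lt_inf'_iff]
      intro i hi
      have := (Finset.mem_filter.mp hi).2
      linarith
    obtain ⟨x, hxS, hx⟩ := exists_lt_of_csInf_lt (kthDist_set_nonempty c r k q hkn)
      (show sInf _ < τ + ε by rw [← kthDist]; linarith)
    have hτx : τ ≤ x := kthDist_le c r k q hxS.1 hxS.2
    have hsub : {i : Fin n | g i ≤ x} ⊆ {i : Fin n | g i ≤ τ} := by
      intro i hi
      simp only [Set.mem_setOf_eq] at hi ⊢
      by_contra h
      push_neg at h
      have hiD : i ∈ Finset.univ.filter fun i => τ < g i := by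
        simp [h]
      have := Finset.inf'_le (fun i => g i - τ) hiD
      linarith
    exact le_trans hxS.2 (Set.ncard_le_ncard hsub (Set.toFinite _))
  · have h : {i : Fin n | g i ≤ τ} = Set.univ := by
      ext i
      simp only [Set.mem_setOf_eq, Set.mem_univ, iff_true]
      by_contra h
      exact hDF ⟨i, by simp [lt_of_not_ge h]⟩
    rw [h, Set.ncard_univ]
    simpa using hkn

/-- With `γ = min k c_d`, one has `d_{k-γ}(C, q) / 2 ≤ d_k(𝓑, q)`, where `C` is the
set of centers of the pairwise disjoint balls `𝓑` and `cd` is the packing constant. -/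
theorem stmt_7 (d n : ℕ) (c : Fin n → EuclideanSpace ℝ (Fin d)) (r : Fin n → ℝ)
    (hr : ∀ i, 0 ≤ r i)
    (hdisj : ∀ i j, i ≠ j →
      Disjoint (Metric.closedBall (c i) (r i)) (Metric.closedBall (c j) (r j)))
    (k : ℕ) (hk1 : 1 ≤ k) (hkn : k ≤ n) (cd : ℕ)
    (hcd : ∀ (p : EuclideanSpace ℝ (Fin d)) (ρ : ℝ), 0 < ρ → ∀ (m : ℕ)
        (w : Fin m → EuclideanSpace ℝ (Fin d)) (s : Fin m → ℝ),
      (∀ i, ρ ≤ s i) →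
      (∀ i j, i ≠ j →
        Disjoint (Metric.closedBall (w i) (s i)) (Metric.closedBall (w j) (s j))) →
      (∀ i, (Metric.closedBall (w i) (s i) ∩ Metric.closedBall p ρ).Nonempty) →
      m ≤ cd)
    (q : EuclideanSpace ℝ (Fin d)) :
    kthDist c (fun _ => (0 : ℝ)) (k - min k cd) q / 2 ≤ kthDist c r k q := by
  set τ := kthDist c r k q with hτdef
  have hτ0 : 0 ≤ τ := kthDist_nonneg c r k q hkn
  have hA : k ≤ {i : Fin n | ballDist q (c i) (r i) ≤ τ}.ncard := kthDist_mem c r k q hkn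
  have hcd1 : 1 ≤ cd := by
    refine hcd q 1 one_pos 1 (fun _ => q) (fun _ => 1) (fun _ => le_refl 1)
      (fun i j h => absurd (Subsingleton.elim i j) h) (fun i => ⟨q, by simp⟩)
  -- basic facts about ballDist
  have hbd : ∀ i, ballDist q (c i) (r i) ≤ τ → ‖q - c i‖ ≤ r i + τ := by
    intro i h
    have := le_trans (le_max_left (‖q - c i‖ - r i) 0) h
    linarith
  set bad := {i : Fin n | ballDist q (c i) (r i) ≤ τ ∧ 2 * τ < ‖q - c i‖} with hbaddef
  have hbad : bad.ncard ≤ cd := by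
    rcases eq_or_lt_of_le hτ0 with h0 | hτpos
    · -- τ = 0
      have hsub : bad.Subsingleton := by
        intro i hi j hj
        by_contra hij
        have hqi : q ∈ Metric.closedBall (c i) (r i) := by
          rw [Metric.mem_closedBall, dist_eq_norm]
          have := hbd i hi.1; linarith
        have hqj : q ∈ Metric.closedBall (c j) (r j) := by
          rw [Metric.mem_closedBall, dist_eq_norm]
          have := hbd j hj.1; linarith
        exact Set.disjoint_left.mp (hdisj i j hij) hqi hqj
      rcases Set.eq_empty_or_nonempty bad with he | ⟨i0, hi0⟩
      · simp [he]
      · have : bad ⊆ {i0} := fun j hj => hsub hj hi0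
        calc bad.ncard ≤ ({i0} : Set (Fin n)).ncard :=
              Set.ncard_le_ncard this (Set.finite_singleton i0)
          _ = 1 := Set.ncard_singleton i0
          _ ≤ cd := hcd1
    · -- τ > 0
      set badF := Finset.univ.filter
        (fun i => ballDist q (c i) (r i) ≤ τ ∧ 2 * τ < ‖q - c i‖) with hbadF
      have hbadcoe : bad = ↑badF := by ext i; simp [hbaddef, hbadF]
      rw [hbadcoe, Set.ncard_coe_finset]
      set m := badF.card with hm
      set e := badF.orderIsoOfFin rfl with he
      have hmem : ∀ i : Fin m, ballDist q (c (e i)) (r (e i)) ≤ τ ∧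
          2 * τ < ‖q - c (e i)‖ := by
        intro i
        exact (Finset.mem_filter.mp (e i).2).2
      refine hcd q τ hτpos m (fun i => c (e i)) (fun i => r (e i)) ?_ ?_ ?_
      · intro i
        obtain ⟨h1, h2⟩ := hmem i
        have := hbd _ h1
        linarith
      · intro i j hij
        exact hdisj _ _ (fun h => hij (e.injective (Subtype.ext h)))
      · intro i
        obtain ⟨h1, h2⟩ := hmem i
        have hle : ‖q - c (e i)‖ ≤ r (e i) + τ := hbd _ h1
        set D := ‖q - c (e i)‖ with hD
        have hDpos : 0 < D := by linarith
        refine ⟨q + (τ / D) • ((c (e i) : EuclideanSpace ℝ (Fin d)) - q), ?_, ?_⟩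
        · rw [Metric.mem_closedBall, dist_eq_norm]
          have heq : q + (τ / D) • ((c (e i) : EuclideanSpace ℝ (Fin d)) - q) - c (e i)
              = (1 - τ / D) • (q - c (e i)) := by
            rw [sub_smul, one_smul, smul_sub, smul_sub]
            abel
          rw [heq, norm_smul, Real.norm_eq_abs, ← hD]
          have hfrac : τ / D ≤ 1 := by
            rw [div_le_one hDpos]; linarith
          rw [abs_of_nonneg (by linarith)]
          have : (1 - τ / D) * D = D - τ := by field_simp
          rw [this]; linarith
        · rw [Metric.mem_closedBall, dist_eq_norm]
          have heq : q + (τ / D) • ((c (e i) : EuclideanSpace ℝ (Fin d)) - q) - q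
              = (τ / D) • (c (e i) - q) := by abel
          rw [heq, norm_smul, Real.norm_eq_abs, norm_sub_rev, ← hD,
            abs_of_nonneg (by positivity)]
          rw [div_mul_cancel₀ τ hDpos.ne']
  -- counting
  set good := {i : Fin n | ballDist q (c i) ((fun _ => (0:ℝ)) i) ≤ 2 * τ} with hgooddef
  have hsplit : {i : Fin n | ballDist q (c i) (r i) ≤ τ} ⊆ good ∪ bad := by
    intro i hi
    simp only [Set.mem_setOf_eq] at hi
    by_cases h : ‖q - c i‖ ≤ 2 * τ
    · left
      simp only [hgooddef, Set.mem_setOf_eq, ballDist]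
      exact max_le (by linarith) (by linarith)
    · right
      exact ⟨hi, lt_of_not_ge h⟩
  have hcount : k ≤ good.ncard + cd := by
    calc k ≤ {i : Fin n | ballDist q (c i) (r i) ≤ τ}.ncard := hA
      _ ≤ (good ∪ bad).ncard := Set.ncard_le_ncard hsplit (Set.toFinite _)
      _ ≤ good.ncard + bad.ncard := Set.ncard_union_le _ _
      _ ≤ good.ncard + cd := by omega
  have hkey : kthDist c (fun _ => (0 : ℝ)) (k - min k cd) q ≤ 2 * τ := by
    apply kthDist_le c (fun _ => (0:ℝ)) (k - min k cd) q (by linarith)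
    have : k - min k cd ≤ good.ncard := by omega
    exact this
  linarith
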